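/- Let v, w ∈ S_n such that there are no unexpected zeros, i.e., for every (i,j) ∈ D°(v) one has t_{v(j),i}·v ≤ w in Bruhat order. Then the graph G_{v,w} contains a cycle (in its underlying undirected graph) if and only if there exist (i,j), (k,l) ∈ D°(v) with i < k and j < l. -/

import Mathlib

/-- The Coxeter length of a permutation: its number of inversions. -/
def coxeterLength {n : ℕ} (w : Equiv.Perm (Fin n)) : ℕ :=
  (Finset.univ.filter fun p : Fin n × Fin n => p.1 < p.2 ∧ w p.2 < w p.1).card

/-- A simple reflection `s_i = t_{i,i+1}`. -/
def IsSimpleRefl {n : ℕ} (x : Equiv.Perm (Fin n)) : Prop :=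
  ∃ (i : Fin n) (h : (i : ℕ) + 1 < n), x = Equiv.swap i ⟨(i : ℕ) + 1, h⟩

/-- `l` is a reduced word for `w`. -/
def IsReducedWord {n : ℕ} (w : Equiv.Perm (Fin n)) (l : List (Equiv.Perm (Fin n))) : Prop :=
  (∀ x ∈ l, IsSimpleRefl x) ∧ l.prod = w ∧ l.length = coxeterLength w

/-- The Bruhat order via the subword property. -/
def BruhatLE {n : ℕ} (v w : Equiv.Perm (Fin n)) : Prop :=
  ∃ lw lv : List (Equiv.Perm (Fin n)),
    IsReducedWord w lw ∧ IsReducedWord v lv ∧ lv.Sublist lw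

/-- Membership `(i,j) ∈ D°(v)`. -/
def InOppRothe {n : ℕ} (v : Equiv.Perm (Fin n)) (i j : Fin n) : Prop :=
  v j < i ∧ j < v.symm i

/-- The (underlying undirected simple graph of the) graph `G_{v,w}` with an edge
`v(j) — i` for each `(i,j) ∈ D°(v)` with `t_{v(j),i}·v ≤ w`; here, assuming no
unexpected zeros, every `(i,j) ∈ D°(v)` contributes its edge. -/
def GvwGraph {n : ℕ} (v : Equiv.Perm (Fin n)) : SimpleGraph (Fin n) :=
  SimpleGraph.fromEdgeSet {e | ∃ i j : Fin n, InOppRothe v i j ∧ e = s(v j, i)}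

open SimpleGraph

section CycleHelpers

lemma Aux.not_acyclic_of_triangle {V : Type*} {G : SimpleGraph V} {a b c : V}
    (hab : G.Adj a b) (hbc : G.Adj b c) (hca : G.Adj c a) : ¬ G.IsAcyclic := by
  intro h
  refine h (.cons hab (.cons hbc (.cons hca .nil))) ?_
  have h1 := hab.ne
  have h2 := hbc.ne
  have h3 := hca.ne
  have h4 := hca.ne'
  simp [Walk.isCycle_def, Walk.isTrail_def, List.Nodup, Sym2.eq_iff]
  aesop

lemma Aux.not_acyclic_of_square {V : Type*} {G : SimpleGraph V} {a b c d : V}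
    (hab : G.Adj a b) (hbc : G.Adj b c) (hcd : G.Adj c d) (hda : G.Adj d a)
    (hac : a ≠ c) (hbd : b ≠ d) : ¬ G.IsAcyclic := by
  intro h
  refine h (.cons hab (.cons hbc (.cons hcd (.cons hda .nil)))) ?_
  have h1 := hab.ne
  have h2 := hbc.ne
  have h3 := hcd.ne
  have h4 := hda.ne
  simp [Walk.isCycle_def, Walk.isTrail_def, List.Nodup, Sym2.eq_iff]
  aesop

lemma Aux.firstEdge_mem {V : Type*} {G : SimpleGraph V} {u v : V} (p : G.Walk u v)
    (hp : ¬ p.Nil) : s(u, p.getVert 1) ∈ p.edges := by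
  cases p with
  | nil => simp at hp
  | cons h q => simp [Walk.getVert_cons, Walk.edges_cons]

/-- Every vertex on a cycle has (at least) two distinct incident edges among the
cycle's edges. -/
lemma Aux.two_edges {V : Type*} [DecidableEq V] {G : SimpleGraph V} {r : V} {c : G.Walk r r}
    (hc : c.IsCycle) {u : V} (hu : u ∈ c.support) :
    ∃ x y : V, x ≠ y ∧ s(u, x) ∈ c.edges ∧ s(u, y) ∈ c.edges := by
  have hrot : (c.rotate u hu).IsCycle := hc.rotate hu
  have hmem : ∀ e, e ∈ (c.rotate u hu).edges → e ∈ c.edges :=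
    fun e he => (Walk.rotate_edges c u hu).mem_iff.mp he
  revert hrot hmem
  generalize (c.rotate u hu) = d
  intro hrot hmem
  cases d with
  | nil => exact absurd hrot (Walk.IsCycle.not_of_nil)
  | @cons _ x _ h p =>
    have hlen : 2 ≤ p.length := by
      have := hrot.three_le_length
      simpa [Walk.length_cons] using this
    have hpnil : ¬ p.reverse.Nil := by
      rw [Walk.nil_iff_length_eq, Walk.length_reverse]
      omega
    have hyedge : s(u, p.reverse.getVert 1) ∈ p.edges := by
      have := Aux.firstEdge_mem p.reverse hpnil
      rwa [Walk.edges_reverse, List.mem_reverse] at this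
    have hxy : x ≠ p.reverse.getVert 1 := by
      intro hxyeq
      have hnodup := hrot.edges_nodup
      rw [Walk.edges_cons] at hnodup
      have := List.nodup_cons.mp hnodup
      rw [← hxyeq] at hyedge
      exact this.1 hyedge
    exact ⟨x, p.reverse.getVert 1, hxy, hmem _ (by simp),
      hmem _ (by rw [Walk.edges_cons]; exact List.mem_cons_of_mem _ hyedge)⟩

end CycleHelpers

section GvwLemmas

variable {n : ℕ} (v : Equiv.Perm (Fin n))

/-- Adjacency in `GvwGraph v` corresponds exactly to non-inversion pairs of `v`. -/
lemma Aux.gvw_adj_iff {x y : Fin n} :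
    (GvwGraph v).Adj x y ↔ ∃ j m : Fin n, j < m ∧ v j < v m ∧ s(x, y) = s(v j, v m) := by
  constructor
  · intro hadj
    rw [GvwGraph, SimpleGraph.fromEdgeSet_adj] at hadj
    obtain ⟨⟨i, j, ⟨h1, h2⟩, he⟩, hne⟩ := hadj
    refine ⟨j, v.symm i, h2, by simpa using h1, by simpa using he⟩
  · rintro ⟨j, m, hjm, hvjm, he⟩
    rw [GvwGraph, SimpleGraph.fromEdgeSet_adj]
    constructor
    · exact ⟨v m, j, ⟨hvjm, by simpa using hjm⟩, by simpa using he⟩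
    · rcases Sym2.eq_iff.mp he with ⟨hx, hy⟩ | ⟨hx, hy⟩
      · subst hx; subst hy; exact ne_of_lt hvjm
      · subst hx; subst hy; exact (ne_of_lt hvjm).symm

lemma Aux.gvw_adj_of (j m : Fin n) (hjm : j < m) (hvm : v j < v m) :
    (GvwGraph v).Adj (v j) (v m) :=
  (Aux.gvw_adj_iff v).mpr ⟨j, m, hjm, hvm, rfl⟩

lemma Aux.pos_lt_of_adj {x y : Fin n} (h : (GvwGraph v).Adj x y) (hxy : x < y) :
    v.symm x < v.symm y := by
  obtain ⟨j, m, hjm, hvm, he⟩ := (Aux.gvw_adj_iff v).mp h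
  rcases Sym2.eq_iff.mp he with ⟨hx, hy⟩ | ⟨hx, hy⟩
  · subst hx; subst hy; simpa using hjm
  · subst hx; subst hy; exact absurd hxy (not_lt.mpr hvm.le)

/-- The key contradiction: assuming no "southeast" pair of cells, a vertex `M`
dominating three cycle vertices `a, b, q` (suitably adjacent) is impossible. -/
lemma Aux.key {H : ∀ j m l p : Fin n, j < m → v j < v m → l < p → v l < v p → j < l →
      v p ≤ v m}
    {M a b q : Fin n}
    (haM : a < M) (hbM : b < M) (hqM : q < M)
    (hadj_aM : (GvwGraph v).Adj a M) (hadj_bM : (GvwGraph v).Adj b M)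
    (hadj_aq : (GvwGraph v).Adj a q)
    (hposab : v.symm a < v.symm b) : False := by
  have hpos_bM : v.symm b < v.symm M := Aux.pos_lt_of_adj v hadj_bM hbM
  have hpos_aM : v.symm a < v.symm M := Aux.pos_lt_of_adj v hadj_aM haM
  rcases lt_or_gt_of_ne hadj_aq.ne with h | h
  · -- a < q
    have hpos_aq : v.symm a < v.symm q := Aux.pos_lt_of_adj v hadj_aq h
    have := H (v.symm a) (v.symm q) (v.symm b) (v.symm M) hpos_aq (by simpa using h)
      hpos_bM (by simpa using hbM) hposab
    simp only [Equiv.apply_symm_apply] at this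
    exact absurd this (not_le.mpr hqM)
  · -- q < a
    have hpos_qa : v.symm q < v.symm a := Aux.pos_lt_of_adj v (hadj_aq.symm) h
    have := H (v.symm q) (v.symm a) (v.symm b) (v.symm M) hpos_qa (by simpa using h)
      hpos_bM (by simpa using hbM) (lt_trans hpos_qa hposab)
    simp only [Equiv.apply_symm_apply] at this
    exact absurd this (not_le.mpr haM)

end GvwLemmas

/-- Suppose there are no unexpected zeros, i.e. `t_{v(j),i}·v ≤ w` for every
`(i,j) ∈ D°(v)`. Then `G_{v,w}` contains a cycle (in its underlying undirected
graph) iff there exist `(i,j), (k,l) ∈ D°(v)` with `i < k` and `j < l`. -/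
theorem contains_cycle_iff (n : ℕ) (v w : Equiv.Perm (Fin n))
    (hno : ∀ i j : Fin n, InOppRothe v i j → BruhatLE (Equiv.swap (v j) i * v) w) :
    ¬ (GvwGraph v).IsAcyclic ↔
      ∃ i j k l : Fin n, InOppRothe v i j ∧ InOppRothe v k l ∧ i < k ∧ j < l := by
  have pair_iff : (∃ i j k l : Fin n, InOppRothe v i j ∧ InOppRothe v k l ∧ i < k ∧ j < l) ↔
      ∃ j m l p : Fin n, j < m ∧ v j < v m ∧ l < p ∧ v l < v p ∧ j < l ∧ v m < v p := by
    constructor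
    · rintro ⟨i, j, k, l, ⟨h1, h2⟩, ⟨h3, h4⟩, hik, hjl⟩
      exact ⟨j, v.symm i, l, v.symm k, h2, by simpa using h1, h4, by simpa using h3,
        hjl, by simpa using hik⟩
    · rintro ⟨j, m, l, p, h1, h2, h3, h4, h5, h6⟩
      exact ⟨v m, j, v p, l, ⟨h2, by simpa using h1⟩, ⟨h4, by simpa using h3⟩, h6, h5⟩
  rw [pair_iff]
  constructor
  · -- a cycle yields a southeast pair of cells
    intro hcyc
    by_contra hno'
    push_neg at hno'
    apply hcyc
    intro u c hc
    have hsupp_ne : u ∈ c.support := Walk.start_mem_support c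
    have hne : c.support.toFinset.Nonempty := ⟨u, List.mem_toFinset.mpr hsupp_ne⟩
    set M := c.support.toFinset.max' hne with hM
    have hMmem : M ∈ c.support := List.mem_toFinset.mp (c.support.toFinset.max'_mem hne)
    have hmax : ∀ x ∈ c.support, x ≤ M :=
      fun x hx => c.support.toFinset.le_max' x (List.mem_toFinset.mpr hx)
    obtain ⟨a, b, hab, ha, hb⟩ := Aux.two_edges hc hMmem
    have hadj_Ma : (GvwGraph v).Adj M a := (SimpleGraph.mem_edgeSet _).mp (c.edges_subset_edgeSet ha)
    have hadj_Mb : (GvwGraph v).Adj M b := (SimpleGraph.mem_edgeSet _).mp (c.edges_subset_edgeSet hb)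
    have haS : a ∈ c.support := c.snd_mem_support_of_mem_edges ha
    have hbS : b ∈ c.support := c.snd_mem_support_of_mem_edges hb
    have haM : a < M := lt_of_le_of_ne (hmax a haS) hadj_Ma.ne'
    have hbM : b < M := lt_of_le_of_ne (hmax b hbS) hadj_Mb.ne'
    -- pick the one of `a`, `b` with the smaller position, and find its second neighbour
    have main : ∀ a b : Fin n, a < M → b < M → (GvwGraph v).Adj M a → (GvwGraph v).Adj M b →
        v.symm a < v.symm b → a ∈ c.support → False := by
      intro a b haM hbM hadj_Ma hadj_Mb hposab haS
      obtain ⟨x, y, hxy, hx, hy⟩ := Aux.two_edges hc haS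
      -- choose the neighbour of `a` different from `M`
      have hq : ∃ q : Fin n, q ≠ M ∧ s(a, q) ∈ c.edges := by
        by_cases hxM : x = M
        · exact ⟨y, fun hyM => hxy (by rw [hxM, hyM]), hy⟩
        · exact ⟨x, hxM, hx⟩
      obtain ⟨q, hqM', hq⟩ := hq
      have hadj_aq : (GvwGraph v).Adj a q := (SimpleGraph.mem_edgeSet _).mp (c.edges_subset_edgeSet hq)
      have hqS : q ∈ c.support := c.snd_mem_support_of_mem_edges hq
      have hqM : q < M := lt_of_le_of_ne (hmax q hqS) hqM'
      exact Aux.key v (H := hno') haM hbM hqM hadj_Ma.symm hadj_Mb.symm hadj_aq hposab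
    have habne : v.symm a ≠ v.symm b := fun hh => hab (v.symm.injective hh)
    rcases lt_or_gt_of_ne habne with hlt | hgt
    · exact main a b haM hbM hadj_Ma hadj_Mb hlt haS
    · exact main b a hbM haM hadj_Mb hadj_Ma hgt hbS
  · -- a southeast pair of cells yields a cycle
    rintro ⟨j, m, l, p, hjm, hvjm, hlp, hvlp, hjl, hvmp⟩
    have e_jp : (GvwGraph v).Adj (v j) (v p) :=
      Aux.gvw_adj_of v j p (lt_trans hjl hlp) (lt_trans hvjm hvmp)
    have e_lp : (GvwGraph v).Adj (v l) (v p) := Aux.gvw_adj_of v l p hlp hvlp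
    rcases le_or_gt m l with hml | hlm
    · -- triangle v j, v m, v p
      have e_jm : (GvwGraph v).Adj (v j) (v m) := Aux.gvw_adj_of v j m hjm hvjm
      have e_mp : (GvwGraph v).Adj (v m) (v p) :=
        Aux.gvw_adj_of v m p (lt_of_le_of_lt hml hlp) hvmp
      exact Aux.not_acyclic_of_triangle e_jm e_mp e_jp.symm
    · rcases lt_or_gt_of_ne (fun hh : v l = v m => (ne_of_lt hlm) (v.injective hh))
        with hvlm | hvml
      · -- 4-cycle v j, v m, v l, v p
        have e_jm : (GvwGraph v).Adj (v j) (v m) := Aux.gvw_adj_of v j m hjm hvjm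
        have e_lm : (GvwGraph v).Adj (v l) (v m) := Aux.gvw_adj_of v l m hlm hvlm
        have hjlne : v j ≠ v l := fun hh => (ne_of_lt hjl) (v.injective hh)
        have hmpne : v m ≠ v p := ne_of_lt hvmp
        exact Aux.not_acyclic_of_square e_jm e_lm.symm e_lp e_jp.symm hjlne hmpne
      · -- triangle v j, v l, v p
        have e_jl : (GvwGraph v).Adj (v j) (v l) :=
          Aux.gvw_adj_of v j l hjl (lt_trans hvjm hvml)
        exact Aux.not_acyclic_of_triangle e_jl e_lp e_jp.symm
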